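/- Let H and K be disjoint signed graphs and let Γ be obtained by connecting a vertex v of H and a vertex u of K with a signed path P_m (m ≥ 2), i.e., identifying one endpoint of P_m with v and the other with u. Then η(Γ) ≤ η(H) + η(K) + 1. -/

import Mathlib

open scoped Classical

open Module LinearMap

/-- rank–nullity style bound: the dimension of a submodule is at most the dimension of its
intersection with the kernel of `f` plus the dimension of its image under `f`. -/
private lemma aux_finrank_le {V X : Type*} [AddCommGroup V] [Module ℝ V] [FiniteDimensional ℝ V]
    [AddCommGroup X] [Module ℝ X] (S : Submodule ℝ V) (f : V →ₗ[ℝ] X) :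
    finrank ℝ S ≤ finrank ℝ ↥(S ⊓ LinearMap.ker f) + finrank ℝ ↥(S.map f) := by
  have h := (f.domRestrict S).finrank_range_add_finrank_ker
  rw [LinearMap.range_domRestrict] at h
  have hker : LinearMap.ker (f.domRestrict S)
      = Submodule.comap S.subtype (S ⊓ LinearMap.ker f) := by
    rw [LinearMap.ker_domRestrict, Submodule.comap_inf, Submodule.comap_subtype_self, top_inf_eq]
  have e : ↥(LinearMap.ker (f.domRestrict S)) ≃ₗ[ℝ] ↥(S ⊓ LinearMap.ker f) := by
    rw [hker]; exact Submodule.comapSubtypeEquivOfLe inf_le_left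
  rw [e.finrank_eq] at h
  omega

private lemma step_le {V X : Type*} [AddCommGroup V] [Module ℝ V] [FiniteDimensional ℝ V]
    [AddCommGroup X] [Module ℝ X] (S : Submodule ℝ V) (f : V →ₗ[ℝ] X)
    (T : Submodule ℝ X) [Module.Finite ℝ T] (hm : Submodule.map f S ≤ T) :
    finrank ℝ S ≤ finrank ℝ ↥(S ⊓ LinearMap.ker f) + finrank ℝ T :=
  (aux_finrank_le S f).trans (add_le_add_right (Submodule.finrank_mono hm) _)

private lemma aux_fin_sum_point {k : ℕ} (n : ℕ) (g : Fin k → ℝ) :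
    (∑ j : Fin k, if (j : ℕ) = n then g j else 0) = if h : n < k then g ⟨n, h⟩ else 0 := by
  split_ifs with h
  · rw [Finset.sum_eq_single (⟨n, h⟩ : Fin k)]
    · simp
    · intro b _ hb
      rw [if_neg (fun hc => hb (Fin.ext hc))]
    · simp
  · refine Finset.sum_eq_zero fun j _ => ?_
    rw [if_neg (by have := j.2; omega)]

private lemma sum_onepoint {β : Type*} [Fintype β] (b0 : β) (c g : β → ℝ)
    (h : ∀ b, b ≠ b0 → c b = 0) : ∑ b, c b * g b = c b0 * g b0 :=
  Finset.sum_eq_single b0 (fun b _ hb => by rw [h b hb, zero_mul])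
    (fun h' => absurd (Finset.mem_univ b0) h')

/-- The nullity of a real matrix: the dimension of the kernel of the
associated linear map. -/
noncomputable def Matrix.nullity {n : Type*} [Fintype n] (A : Matrix n n ℝ) : ℕ :=
  Module.finrank ℝ (LinearMap.ker A.mulVecLin)

/-- Let `H` and `K` be disjoint signed graphs and let `Γ` be
obtained by connecting a vertex `v` of `H` and a vertex `u` of `K` by a signed
path `Pₘ` with `m = k + 2 ≥ 2` vertices (so with `k ≥ 0` internal vertices and
`k + 1` signed edges `τ 0, …, τ k`).  Then `η(Γ) ≤ η(H) + η(K) + 1`. -/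
theorem nullity_bridge_path {W U : Type*} [Fintype W] [DecidableEq W]
    [Fintype U] [DecidableEq U]
    (GH : SimpleGraph W) (σH : W → W → ℝ)
    (hsymH : ∀ x y, σH x y = σH y x)
    (hσH : ∀ x y, GH.Adj x y → σH x y = 1 ∨ σH x y = -1)
    (AH : Matrix W W ℝ)
    (hAH : ∀ x y, AH x y = if GH.Adj x y then σH x y else 0)
    (GK : SimpleGraph U) (σK : U → U → ℝ)
    (hsymK : ∀ x y, σK x y = σK y x)
    (hσK : ∀ x y, GK.Adj x y → σK x y = 1 ∨ σK x y = -1)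
    (AK : Matrix U U ℝ)
    (hAK : ∀ x y, AK x y = if GK.Adj x y then σK x y else 0)
    (v : W) (u : U) (k : ℕ)
    (τ : Fin (k + 1) → ℝ) (hτ : ∀ i, τ i = 1 ∨ τ i = -1)
    (A : Matrix (W ⊕ U ⊕ Fin k) (W ⊕ U ⊕ Fin k) ℝ)
    (hsymA : A.IsSymm)
    (hA1 : ∀ x y : W, A (Sum.inl x) (Sum.inl y) = AH x y)
    (hA2 : ∀ a b : U, A (Sum.inr (Sum.inl a)) (Sum.inr (Sum.inl b)) = AK a b)
    (hA3 : ∀ i j : Fin k,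
      A (Sum.inr (Sum.inr i)) (Sum.inr (Sum.inr j)) =
        if (i : ℕ) + 1 = (j : ℕ) then τ j.castSucc
        else if (j : ℕ) + 1 = (i : ℕ) then τ i.castSucc else 0)
    (hA4 : ∀ (x : W) (i : Fin k),
      A (Sum.inl x) (Sum.inr (Sum.inr i)) =
        if x = v ∧ (i : ℕ) = 0 then τ 0 else 0)
    (hA5 : ∀ (a : U) (i : Fin k),
      A (Sum.inr (Sum.inl a)) (Sum.inr (Sum.inr i)) =
        if a = u ∧ (i : ℕ) + 1 = k then τ (Fin.last k) else 0)
    (hA6 : ∀ (x : W) (a : U),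
      A (Sum.inl x) (Sum.inr (Sum.inl a)) =
        if k = 0 ∧ x = v ∧ a = u then τ 0 else 0) :
    A.nullity ≤ AH.nullity + AK.nullity + 1 := by
  have hτne : ∀ i, τ i ≠ 0 := fun i => by rcases hτ i with h | h <;> rw [h] <;> norm_num
  have hA4' : ∀ (i : Fin k) (x : W),
      A (Sum.inr (Sum.inr i)) (Sum.inl x) = if x = v ∧ (i : ℕ) = 0 then τ 0 else 0 :=
    fun i x => by rw [hsymA.apply, hA4]
  have hA5' : ∀ (i : Fin k) (a : U),
      A (Sum.inr (Sum.inr i)) (Sum.inr (Sum.inl a)) =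
        if a = u ∧ (i : ℕ) + 1 = k then τ (Fin.last k) else 0 :=
    fun i a => by rw [hsymA.apply, hA5]
  have hA6' : ∀ (a : U) (x : W),
      A (Sum.inr (Sum.inl a)) (Sum.inl x) = if k = 0 ∧ x = v ∧ a = u then τ 0 else 0 :=
    fun a x => by rw [hsymA.apply, hA6]
  simp only [Matrix.nullity]
  rcases Nat.eq_zero_or_pos k with hk | hk
  · -- trivial path : `k = 0`, the bridge is a single edge `v — u`.
    subst hk
    have hrowW0 : ∀ (x : W ⊕ U ⊕ Fin 0 → ℝ), A.mulVec x = 0 → ∀ x0 : W,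
        (∑ y : W, AH x0 y * x (Sum.inl y)) +
          (if x0 = v then τ 0 * x (Sum.inr (Sum.inl u)) else 0) = 0 := by
      intro x hx x0
      have h0 := congrFun hx (Sum.inl x0)
      simp only [Matrix.mulVec, dotProduct, Fintype.sum_sum_type, Pi.zero_apply] at h0
      simp only [hA1] at h0
      have e2 : (∑ b : U, A (Sum.inl x0) (Sum.inr (Sum.inl b)) * x (Sum.inr (Sum.inl b))) =
          (if x0 = v then τ 0 * x (Sum.inr (Sum.inl u)) else 0) := by
        by_cases hc : x0 = v
        · rw [if_pos hc]
          have hs : (∑ b : U, A (Sum.inl x0) (Sum.inr (Sum.inl b)) * x (Sum.inr (Sum.inl b)))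
              = A (Sum.inl x0) (Sum.inr (Sum.inl u)) * x (Sum.inr (Sum.inl u)) :=
            sum_onepoint u (fun b => A (Sum.inl x0) (Sum.inr (Sum.inl b)))
              (fun b => x (Sum.inr (Sum.inl b)))
              (fun b hb => by
                show A (Sum.inl x0) (Sum.inr (Sum.inl b)) = 0
                rw [hA6, if_neg (fun hcc => hb hcc.2.2)])
          rw [hs, hA6, if_pos ⟨rfl, hc, rfl⟩]
        · rw [if_neg hc]
          exact Finset.sum_eq_zero fun b _ => by
            rw [hA6, if_neg (fun hcc => hc hcc.2.1), zero_mul]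
      have e3 : (∑ j : Fin 0, A (Sum.inl x0) (Sum.inr (Sum.inr j)) * x (Sum.inr (Sum.inr j)))
          = 0 := by simp
      rw [e2, e3, add_zero] at h0
      exact h0
    have hrowU0 : ∀ (x : W ⊕ U ⊕ Fin 0 → ℝ), A.mulVec x = 0 → ∀ a0 : U,
        (∑ b : U, AK a0 b * x (Sum.inr (Sum.inl b))) +
          (if a0 = u then τ 0 * x (Sum.inl v) else 0) = 0 := by
      intro x hx a0
      have h0 := congrFun hx (Sum.inr (Sum.inl a0))
      simp only [Matrix.mulVec, dotProduct, Fintype.sum_sum_type, Pi.zero_apply] at h0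
      simp only [hA2] at h0
      have e1 : (∑ y : W, A (Sum.inr (Sum.inl a0)) (Sum.inl y) * x (Sum.inl y)) =
          (if a0 = u then τ 0 * x (Sum.inl v) else 0) := by
        by_cases hc : a0 = u
        · rw [if_pos hc]
          have hs : (∑ y : W, A (Sum.inr (Sum.inl a0)) (Sum.inl y) * x (Sum.inl y))
              = A (Sum.inr (Sum.inl a0)) (Sum.inl v) * x (Sum.inl v) :=
            sum_onepoint v (fun y => A (Sum.inr (Sum.inl a0)) (Sum.inl y))
              (fun y => x (Sum.inl y))
              (fun y hy => by
                show A (Sum.inr (Sum.inl a0)) (Sum.inl y) = 0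
                rw [hA6', if_neg (fun hcc => hy hcc.2.1)])
          rw [hs, hA6', if_pos ⟨rfl, rfl, hc⟩]
        · rw [if_neg hc]
          exact Finset.sum_eq_zero fun y _ => by
            rw [hA6', if_neg (fun hcc => hc hcc.2.2), zero_mul]
      have e3 : (∑ j : Fin 0,
          A (Sum.inr (Sum.inl a0)) (Sum.inr (Sum.inr j)) * x (Sum.inr (Sum.inr j))) = 0 := by
        simp
      rw [e1, e3, add_zero] at h0
      linarith
    set f1 : ((W ⊕ U ⊕ Fin 0) → ℝ) →ₗ[ℝ] ℝ :=
      LinearMap.proj (Sum.inr (Sum.inl u)) with hf1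
    set fW : ((W ⊕ U ⊕ Fin 0) → ℝ) →ₗ[ℝ] (W → ℝ) :=
      LinearMap.funLeft ℝ ℝ Sum.inl with hfW
    set fU : ((W ⊕ U ⊕ Fin 0) → ℝ) →ₗ[ℝ] (U → ℝ) :=
      LinearMap.funLeft ℝ ℝ (fun b : U => Sum.inr (Sum.inl b)) with hfU
    have h0le : finrank ℝ ↥(LinearMap.ker A.mulVecLin) ≤
        finrank ℝ ↥(LinearMap.ker A.mulVecLin ⊓ LinearMap.ker f1) + 1 := by
      have h := step_le (LinearMap.ker A.mulVecLin) f1 (⊤ : Submodule ℝ ℝ) le_top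
      rwa [finrank_top, finrank_self] at h
    have mapW : Submodule.map fW (LinearMap.ker A.mulVecLin ⊓ LinearMap.ker f1) ≤
        LinearMap.ker AH.mulVecLin := by
      rintro y ⟨x, hx, rfl⟩
      obtain ⟨hx0, hx1⟩ := Submodule.mem_inf.mp hx
      have hxv : A.mulVec x = 0 := by
        have := LinearMap.mem_ker.mp hx0; rwa [Matrix.mulVecLin_apply] at this
      have hu0 : x (Sum.inr (Sum.inl u)) = 0 := LinearMap.mem_ker.mp hx1
      rw [LinearMap.mem_ker]
      funext x0
      have hr := hrowW0 x hxv x0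
      rw [hu0, mul_zero, ite_self, add_zero] at hr
      simpa [Matrix.mulVecLin_apply, Matrix.mulVec, dotProduct, hfW] using hr
    have h1le := step_le (LinearMap.ker A.mulVecLin ⊓ LinearMap.ker f1) fW
      (LinearMap.ker AH.mulVecLin) mapW
    have mapU : Submodule.map fU
        ((LinearMap.ker A.mulVecLin ⊓ LinearMap.ker f1) ⊓ LinearMap.ker fW) ≤
        LinearMap.ker AK.mulVecLin := by
      rintro y ⟨x, hx, rfl⟩
      obtain ⟨hx1, hxW⟩ := Submodule.mem_inf.mp hx
      obtain ⟨hx0, _⟩ := Submodule.mem_inf.mp hx1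
      have hxv : A.mulVec x = 0 := by
        have := LinearMap.mem_ker.mp hx0; rwa [Matrix.mulVecLin_apply] at this
      have hv0 : x (Sum.inl v) = 0 := congrFun (LinearMap.mem_ker.mp hxW) v
      rw [LinearMap.mem_ker]
      funext a0
      have hr := hrowU0 x hxv a0
      rw [hv0, mul_zero, ite_self, add_zero] at hr
      simpa [Matrix.mulVecLin_apply, Matrix.mulVec, dotProduct, hfU] using hr
    have hbot : ((LinearMap.ker A.mulVecLin ⊓ LinearMap.ker f1) ⊓ LinearMap.ker fW) ⊓
        LinearMap.ker fU = ⊥ := by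
      rw [eq_bot_iff]
      intro x hx
      obtain ⟨hx2, hxU⟩ := Submodule.mem_inf.mp hx
      obtain ⟨_, hxW⟩ := Submodule.mem_inf.mp hx2
      have hW : ∀ y : W, x (Sum.inl y) = 0 := fun y => congrFun (LinearMap.mem_ker.mp hxW) y
      have hU : ∀ b : U, x (Sum.inr (Sum.inl b)) = 0 :=
        fun b => congrFun (LinearMap.mem_ker.mp hxU) b
      rw [Submodule.mem_bot]
      funext r
      rcases r with y | b | i
      · simpa using hW y
      · simpa using hU b
      · exact isEmptyElim i
    have h2le : finrank ℝ ↥((LinearMap.ker A.mulVecLin ⊓ LinearMap.ker f1) ⊓ LinearMap.ker fW)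
        ≤ finrank ℝ ↥(LinearMap.ker AK.mulVecLin) := by
      have h := step_le ((LinearMap.ker A.mulVecLin ⊓ LinearMap.ker f1) ⊓ LinearMap.ker fW) fU
        (LinearMap.ker AK.mulVecLin) mapU
      rwa [hbot, finrank_bot, zero_add] at h
    omega
  · -- main case : `k ≥ 1`.
    have hklt : k - 1 < k := by omega
    have hrowW : ∀ (x : W ⊕ U ⊕ Fin k → ℝ), A.mulVec x = 0 → ∀ x0 : W,
        (∑ y : W, AH x0 y * x (Sum.inl y)) +
          (if x0 = v then τ 0 * x (Sum.inr (Sum.inr ⟨0, hk⟩)) else 0) = 0 := by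
      intro x hx x0
      have h0 := congrFun hx (Sum.inl x0)
      simp only [Matrix.mulVec, dotProduct, Fintype.sum_sum_type, Pi.zero_apply] at h0
      simp only [hA1] at h0
      have e2 : (∑ b : U, A (Sum.inl x0) (Sum.inr (Sum.inl b)) * x (Sum.inr (Sum.inl b))) = 0 :=
        Finset.sum_eq_zero fun b _ => by
          rw [hA6, if_neg (fun hc => absurd hc.1 (by omega)), zero_mul]
      have e3 : (∑ j : Fin k, A (Sum.inl x0) (Sum.inr (Sum.inr j)) * x (Sum.inr (Sum.inr j))) =
          (if x0 = v then τ 0 * x (Sum.inr (Sum.inr ⟨0, hk⟩)) else 0) := by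
        by_cases hc : x0 = v
        · rw [if_pos hc]
          have hsplit : ∀ j : Fin k,
              A (Sum.inl x0) (Sum.inr (Sum.inr j)) * x (Sum.inr (Sum.inr j)) =
                (if (j : ℕ) = 0 then τ 0 * x (Sum.inr (Sum.inr j)) else 0) := by
            intro j; rw [hA4]
            by_cases hj : (j : ℕ) = 0
            · rw [if_pos ⟨hc, hj⟩, if_pos hj]
            · rw [if_neg (fun hcc => hj hcc.2), if_neg hj, zero_mul]
          rw [Finset.sum_congr rfl (fun j _ => hsplit j), aux_fin_sum_point 0, dif_pos hk]
        · rw [if_neg hc]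
          exact Finset.sum_eq_zero fun j _ => by
            rw [hA4, if_neg (fun hcc => hc hcc.1), zero_mul]
      rw [e2, zero_add, e3] at h0
      exact h0
    have hrowU : ∀ (x : W ⊕ U ⊕ Fin k → ℝ), A.mulVec x = 0 → ∀ a0 : U,
        (∑ b : U, AK a0 b * x (Sum.inr (Sum.inl b))) +
          (if a0 = u then τ (Fin.last k) * x (Sum.inr (Sum.inr ⟨k - 1, hklt⟩)) else 0) = 0 := by
      intro x hx a0
      have h0 := congrFun hx (Sum.inr (Sum.inl a0))
      simp only [Matrix.mulVec, dotProduct, Fintype.sum_sum_type, Pi.zero_apply] at h0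
      simp only [hA2] at h0
      have e1 : (∑ y : W, A (Sum.inr (Sum.inl a0)) (Sum.inl y) * x (Sum.inl y)) = 0 :=
        Finset.sum_eq_zero fun y _ => by
          rw [hA6', if_neg (fun hc => absurd hc.1 (by omega)), zero_mul]
      have e3 : (∑ j : Fin k,
          A (Sum.inr (Sum.inl a0)) (Sum.inr (Sum.inr j)) * x (Sum.inr (Sum.inr j))) =
          (if a0 = u then τ (Fin.last k) * x (Sum.inr (Sum.inr ⟨k - 1, hklt⟩)) else 0) := by
        by_cases hc : a0 = u
        · rw [if_pos hc]
          have hsplit : ∀ j : Fin k,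
              A (Sum.inr (Sum.inl a0)) (Sum.inr (Sum.inr j)) * x (Sum.inr (Sum.inr j)) =
                (if (j : ℕ) = k - 1 then τ (Fin.last k) * x (Sum.inr (Sum.inr j)) else 0) := by
            intro j; rw [hA5]
            by_cases hj : (j : ℕ) + 1 = k
            · rw [if_pos ⟨hc, hj⟩, if_pos (by omega)]
            · rw [if_neg (fun hcc => hj hcc.2), if_neg (by have := j.2; omega), zero_mul]
          rw [Finset.sum_congr rfl (fun j _ => hsplit j), aux_fin_sum_point (k - 1),
            dif_pos hklt]
        · rw [if_neg hc]
          exact Finset.sum_eq_zero fun j _ => by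
            rw [hA5, if_neg (fun hcc => hc hcc.1), zero_mul]
      rw [e1, zero_add, e3] at h0
      exact h0
    have hrowP : ∀ (x : W ⊕ U ⊕ Fin k → ℝ), A.mulVec x = 0 → ∀ m : Fin k, 1 ≤ (m : ℕ) →
        τ m.castSucc * x (Sum.inr (Sum.inr ⟨(m : ℕ) - 1, lt_of_le_of_lt (Nat.sub_le _ _) m.2⟩)) +
          (if h : (m : ℕ) + 1 < k then τ m.succ * x (Sum.inr (Sum.inr ⟨(m : ℕ) + 1, h⟩))
            else τ (Fin.last k) * x (Sum.inr (Sum.inl u))) = 0 := by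
      intro x hx m hm
      have h0 := congrFun hx (Sum.inr (Sum.inr m))
      simp only [Matrix.mulVec, dotProduct, Fintype.sum_sum_type, Pi.zero_apply] at h0
      have e1 : (∑ y : W, A (Sum.inr (Sum.inr m)) (Sum.inl y) * x (Sum.inl y)) = 0 :=
        Finset.sum_eq_zero fun y _ => by
          rw [hA4', if_neg (fun hc => absurd hc.2 (by omega)), zero_mul]
      have e2 : (∑ b : U,
          A (Sum.inr (Sum.inr m)) (Sum.inr (Sum.inl b)) * x (Sum.inr (Sum.inl b))) =
          (if (m : ℕ) + 1 = k then τ (Fin.last k) * x (Sum.inr (Sum.inl u)) else 0) := by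
        by_cases hc : (m : ℕ) + 1 = k
        · rw [if_pos hc]
          have hs : (∑ b : U,
              A (Sum.inr (Sum.inr m)) (Sum.inr (Sum.inl b)) * x (Sum.inr (Sum.inl b)))
              = A (Sum.inr (Sum.inr m)) (Sum.inr (Sum.inl u)) * x (Sum.inr (Sum.inl u)) :=
            sum_onepoint u (fun b => A (Sum.inr (Sum.inr m)) (Sum.inr (Sum.inl b)))
              (fun b => x (Sum.inr (Sum.inl b)))
              (fun b hb => by
                show A (Sum.inr (Sum.inr m)) (Sum.inr (Sum.inl b)) = 0
                rw [hA5', if_neg (fun hcc => hb hcc.1)])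
          rw [hs, hA5', if_pos ⟨rfl, hc⟩]
        · rw [if_neg hc]
          exact Finset.sum_eq_zero fun b _ => by
            rw [hA5', if_neg (fun hcc => hc hcc.2), zero_mul]
      have e3 : (∑ j : Fin k,
          A (Sum.inr (Sum.inr m)) (Sum.inr (Sum.inr j)) * x (Sum.inr (Sum.inr j))) =
          τ m.castSucc *
              x (Sum.inr (Sum.inr ⟨(m : ℕ) - 1, lt_of_le_of_lt (Nat.sub_le _ _) m.2⟩)) +
            (if h : (m : ℕ) + 1 < k then τ m.succ * x (Sum.inr (Sum.inr ⟨(m : ℕ) + 1, h⟩))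
              else 0) := by
        have hsplit : ∀ j : Fin k,
            A (Sum.inr (Sum.inr m)) (Sum.inr (Sum.inr j)) * x (Sum.inr (Sum.inr j)) =
              (if (j : ℕ) = (m : ℕ) - 1 then τ m.castSucc * x (Sum.inr (Sum.inr j)) else 0) +
                (if (j : ℕ) = (m : ℕ) + 1 then τ m.succ * x (Sum.inr (Sum.inr j)) else 0) := by
          intro j; rw [hA3]
          by_cases h1 : (m : ℕ) + 1 = (j : ℕ)
          · have hj : (j.castSucc : Fin (k + 1)) = m.succ := by
              apply Fin.ext
              simp only [Fin.coe_castSucc, Fin.val_succ]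
              omega
            rw [if_pos h1, hj, if_neg (by omega), if_pos (by omega), zero_add]
          · rw [if_neg h1]
            by_cases h2 : (j : ℕ) + 1 = (m : ℕ)
            · rw [if_pos h2, if_pos (by omega), if_neg (by omega), add_zero]
            · rw [if_neg h2, if_neg (by omega), if_neg (by omega), zero_mul, add_zero]
        rw [Finset.sum_congr rfl (fun j _ => hsplit j), Finset.sum_add_distrib,
          aux_fin_sum_point ((m : ℕ) - 1), aux_fin_sum_point ((m : ℕ) + 1),
          dif_pos (lt_of_le_of_lt (Nat.sub_le _ _) m.2)]
      rw [e1, zero_add, e2, e3] at h0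
      by_cases h : (m : ℕ) + 1 < k
      · rw [dif_pos h]
        rw [if_neg (by omega), zero_add, dif_pos h] at h0
        exact h0
      · rw [dif_neg h]
        rw [if_pos (by have := m.2; omega), dif_neg h, add_zero] at h0
        linarith
    have hPzero : ∀ (x : W ⊕ U ⊕ Fin k → ℝ), A.mulVec x = 0 →
        x (Sum.inr (Sum.inr ⟨k - 1, hklt⟩)) = 0 → x (Sum.inr (Sum.inl u)) = 0 →
        ∀ m : Fin k, x (Sum.inr (Sum.inr m)) = 0 := by
      intro x hx hlast hu0
      have key : ∀ d : ℕ, ∀ i : ℕ, ∀ h : i < k, k - 1 - i ≤ d →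
          x (Sum.inr (Sum.inr ⟨i, h⟩)) = 0 := by
        intro d
        induction d with
        | zero =>
          intro i h hle
          have hi : i = k - 1 := by omega
          subst hi
          exact hlast
        | succ d ih =>
          intro i h hle
          by_cases hc : k - 1 - i ≤ d
          · exact ih i h hc
          · have hi1 : i + 1 < k := by omega
            have hr' := hrowP x hx ⟨i + 1, hi1⟩ (by simp)
            have hr : τ (⟨i + 1, hi1⟩ : Fin k).castSucc * x (Sum.inr (Sum.inr ⟨i, h⟩)) +
                (if h2 : i + 1 + 1 < k then
                    τ (⟨i + 1, hi1⟩ : Fin k).succ * x (Sum.inr (Sum.inr ⟨i + 1 + 1, h2⟩))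
                  else τ (Fin.last k) * x (Sum.inr (Sum.inl u))) = 0 := hr'
            by_cases h2 : i + 1 + 1 < k
            · rw [dif_pos h2, ih (i + 1 + 1) h2 (by omega), mul_zero, add_zero] at hr
              exact (mul_eq_zero.mp hr).resolve_left (hτne _)
            · rw [dif_neg h2, hu0, mul_zero, add_zero] at hr
              exact (mul_eq_zero.mp hr).resolve_left (hτne _)
      intro m
      have := key (k - 1) (m : ℕ) m.2 (by omega)
      simpa using this
    set f1 : ((W ⊕ U ⊕ Fin k) → ℝ) →ₗ[ℝ] ℝ :=
      LinearMap.proj (Sum.inr (Sum.inr ⟨k - 1, hklt⟩)) with hf1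
    set fW : ((W ⊕ U ⊕ Fin k) → ℝ) →ₗ[ℝ] (W → ℝ) :=
      LinearMap.funLeft ℝ ℝ Sum.inl with hfW
    set fU : ((W ⊕ U ⊕ Fin k) → ℝ) →ₗ[ℝ] (U → ℝ) :=
      LinearMap.funLeft ℝ ℝ (fun b : U => Sum.inr (Sum.inl b)) with hfU
    have h0le : finrank ℝ ↥(LinearMap.ker A.mulVecLin) ≤
        finrank ℝ ↥(LinearMap.ker A.mulVecLin ⊓ LinearMap.ker f1) + 1 := by
      have h := step_le (LinearMap.ker A.mulVecLin) f1 (⊤ : Submodule ℝ ℝ) le_top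
      rwa [finrank_top, finrank_self] at h
    have mapU : Submodule.map fU (LinearMap.ker A.mulVecLin ⊓ LinearMap.ker f1) ≤
        LinearMap.ker AK.mulVecLin := by
      rintro y ⟨x, hx, rfl⟩
      obtain ⟨hx0, hx1⟩ := Submodule.mem_inf.mp hx
      have hxv : A.mulVec x = 0 := by
        have := LinearMap.mem_ker.mp hx0; rwa [Matrix.mulVecLin_apply] at this
      have hlast0 : x (Sum.inr (Sum.inr ⟨k - 1, hklt⟩)) = 0 := LinearMap.mem_ker.mp hx1
      rw [LinearMap.mem_ker]
      funext a0
      have hr := hrowU x hxv a0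
      rw [hlast0, mul_zero, ite_self, add_zero] at hr
      simpa [Matrix.mulVecLin_apply, Matrix.mulVec, dotProduct, hfU] using hr
    have h1le := step_le (LinearMap.ker A.mulVecLin ⊓ LinearMap.ker f1) fU
      (LinearMap.ker AK.mulVecLin) mapU
    have mapW : Submodule.map fW
        ((LinearMap.ker A.mulVecLin ⊓ LinearMap.ker f1) ⊓ LinearMap.ker fU) ≤
        LinearMap.ker AH.mulVecLin := by
      rintro y ⟨x, hx, rfl⟩
      obtain ⟨hx1, hxU⟩ := Submodule.mem_inf.mp hx
      obtain ⟨hx0, hxl⟩ := Submodule.mem_inf.mp hx1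
      have hxv : A.mulVec x = 0 := by
        have := LinearMap.mem_ker.mp hx0; rwa [Matrix.mulVecLin_apply] at this
      have hlast0 : x (Sum.inr (Sum.inr ⟨k - 1, hklt⟩)) = 0 := LinearMap.mem_ker.mp hxl
      have hU0 : ∀ b : U, x (Sum.inr (Sum.inl b)) = 0 :=
        fun b => congrFun (LinearMap.mem_ker.mp hxU) b
      have hp : ∀ m : Fin k, x (Sum.inr (Sum.inr m)) = 0 := hPzero x hxv hlast0 (hU0 u)
      rw [LinearMap.mem_ker]
      funext x0
      have hr := hrowW x hxv x0
      rw [hp ⟨0, hk⟩, mul_zero, ite_self, add_zero] at hr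
      simpa [Matrix.mulVecLin_apply, Matrix.mulVec, dotProduct, hfW] using hr
    have hbot : ((LinearMap.ker A.mulVecLin ⊓ LinearMap.ker f1) ⊓ LinearMap.ker fU) ⊓
        LinearMap.ker fW = ⊥ := by
      rw [eq_bot_iff]
      intro x hx
      obtain ⟨hx2, hxW⟩ := Submodule.mem_inf.mp hx
      obtain ⟨hx1, hxU⟩ := Submodule.mem_inf.mp hx2
      obtain ⟨hx0, hxl⟩ := Submodule.mem_inf.mp hx1
      have hxv : A.mulVec x = 0 := by
        have := LinearMap.mem_ker.mp hx0; rwa [Matrix.mulVecLin_apply] at this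
      have hlast0 : x (Sum.inr (Sum.inr ⟨k - 1, hklt⟩)) = 0 := LinearMap.mem_ker.mp hxl
      have hU : ∀ b : U, x (Sum.inr (Sum.inl b)) = 0 :=
        fun b => congrFun (LinearMap.mem_ker.mp hxU) b
      have hW : ∀ y : W, x (Sum.inl y) = 0 := fun y => congrFun (LinearMap.mem_ker.mp hxW) y
      have hp : ∀ m : Fin k, x (Sum.inr (Sum.inr m)) = 0 := hPzero x hxv hlast0 (hU u)
      rw [Submodule.mem_bot]
      funext r
      rcases r with y | b | i
      · simpa using hW y
      · simpa using hU b
      · simpa using hp i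
    have h2le : finrank ℝ
        ↥((LinearMap.ker A.mulVecLin ⊓ LinearMap.ker f1) ⊓ LinearMap.ker fU)
        ≤ finrank ℝ ↥(LinearMap.ker AH.mulVecLin) := by
      have h := step_le ((LinearMap.ker A.mulVecLin ⊓ LinearMap.ker f1) ⊓ LinearMap.ker fU) fW
        (LinearMap.ker AH.mulVecLin) mapW
      rwa [hbot, finrank_bot, zero_add] at h
    omega
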